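/- There is no 3-phase s₁ × ⋯ × s_r Golay array triad when ∏_{k=1}^{r} s_k ≡ 4 (mod 6). -/

import Mathlib

open scoped BigOperators

/-- `ω = e^{2πi/3}`, a primitive cube root of unity. -/
noncomputable def ω : ℂ := Complex.exp (2 * Real.pi * Complex.I / 3)

/-- Aperiodic autocorrelation function of an `r`-dimensional array:
`C_A(u) = Σ_{i ∈ ℤ^r} A(i) conj(A(i+u))`. -/
noncomputable def aperCorrArr {r : ℕ} (A : (Fin r → ℤ) → ℂ) (u : Fin r → ℤ) : ℂ :=
  ∑' i : Fin r → ℤ, A i * (starRingEnd ℂ) (A (i + u))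

/-- A 3-phase `s₁ × ⋯ × s_r` array: vanishes whenever some index is out of
range, and its entries inside the index range lie in `{1, ω, ω²}`. -/
def IsThreePhaseArr (r : ℕ) (s : Fin r → ℕ) (A : (Fin r → ℤ) → ℂ) : Prop :=
  (∀ i : Fin r → ℤ, (∃ k, i k < 0 ∨ (s k : ℤ) ≤ i k) → A i = 0) ∧
    ∀ i : Fin r → ℤ, (∀ k, 0 ≤ i k ∧ i k < (s k : ℤ)) →
      A i ∈ ({1, ω, ω ^ 2} : Set ℂ)

/-- Three 3-phase `s₁ × ⋯ × s_r` arrays forming a 3-phase Golay array triad. -/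
def GolayArrTriad (r : ℕ) (s : Fin r → ℕ) (A B C : (Fin r → ℤ) → ℂ) : Prop :=
  IsThreePhaseArr r s A ∧ IsThreePhaseArr r s B ∧ IsThreePhaseArr r s C ∧
    ∀ u : Fin r → ℤ, u ≠ 0 →
      aperCorrArr A u + aperCorrArr B u + aperCorrArr C u = 0

/-! ### Auxiliary facts about `ω` -/

lemma omega_ne_zero : ω ≠ 0 := Complex.exp_ne_zero _

lemma omega_cube : ω ^ (3:ℕ) = 1 := by
  rw [ω, ← Complex.exp_nat_mul]
  norm_num
  rw [show (3:ℂ) * (2 * Real.pi * Complex.I / 3) = 2 * Real.pi * Complex.I by ring]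
  exact Complex.exp_two_pi_mul_I

lemma omega_ne_one : ω ≠ 1 := by
  intro h
  rw [ω, Complex.exp_eq_one_iff] at h
  obtain ⟨n, hn⟩ := h
  have hπ : (Real.pi : ℂ) ≠ 0 := by simpa using Real.pi_ne_zero
  have h2 : (2:ℂ) * Real.pi * Complex.I ≠ 0 := by
    simp [hπ, Complex.I_ne_zero]
  have h4 : (((n * 3 : ℤ) : ℂ) - 1) * (2 * Real.pi * Complex.I) = 0 := by
    push_cast
    linear_combination (-3) * hn
  rcases mul_eq_zero.1 h4 with h5 | h5
  · have : (n * 3 : ℤ) = (1 : ℤ) := by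
      have : ((n * 3 : ℤ) : ℂ) = 1 := by linear_combination h5
      exact_mod_cast this
    omega
  · exact h2 h5

lemma omega_sum : ω ^ 2 + ω + 1 = 0 := by
  have h := omega_cube
  have h2 : (ω - 1) * (ω ^ 2 + ω + 1) = 0 := by ring_nf; linear_combination h
  rcases mul_eq_zero.1 h2 with h3 | h3
  · exact absurd (by linear_combination h3) omega_ne_one
  · exact h3

lemma omega_conj : (starRingEnd ℂ) ω = ω ^ 2 := by
  have h1 : (starRingEnd ℂ) ω * ω = 1 := by
    rw [ω, ← Complex.exp_conj, ← Complex.exp_add]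
    have : (starRingEnd ℂ) (2 * Real.pi * Complex.I / 3) = -(2 * Real.pi * Complex.I / 3) := by
      simp [map_div₀, map_mul, map_ofNat, Complex.conj_I, Complex.conj_ofReal]
      ring
    rw [this, neg_add_cancel, Complex.exp_zero]
  have h2 : ω ^ 2 * ω = 1 := by rw [← pow_succ]; exact omega_cube
  exact mul_right_cancel₀ omega_ne_zero (h1.trans h2.symm)

lemma omega_inv : ω⁻¹ = ω ^ 2 := by
  have h2 : ω ^ 2 * ω = 1 := by rw [← pow_succ]; exact omega_cube
  exact inv_eq_of_mul_eq_one_left h2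

lemma omega_conj' : (starRingEnd ℂ) ω = ω⁻¹ := by rw [omega_conj, omega_inv]

lemma zpow_three_omega : ω ^ (3:ℤ) = 1 := by
  rw [show (3:ℤ) = ((3:ℕ):ℤ) by norm_num, zpow_natCast]; exact omega_cube

lemma conj_omega_zpow (m : ℤ) : (starRingEnd ℂ) (ω ^ m) = ω ^ (-m) := by
  rw [map_zpow₀, omega_conj', inv_zpow, ← zpow_neg]

/-! ### Sign functions -/

/-- integer sign `(-1)^x` -/
def sZ (x : ℤ) : ℤ := if Even x then 1 else -1

lemma sZ_add (a b : ℤ) : sZ (a + b) = sZ a * sZ b := by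
  unfold sZ
  rcases Int.even_or_odd a with ha | ha <;> rcases Int.even_or_odd b with hb | hb <;>
    simp [Int.even_add, Int.not_even_iff_odd.mpr, ha, hb, Int.not_odd_iff_even.mp]

lemma sZ_sq (a : ℤ) : sZ a * sZ a = 1 := by
  unfold sZ; rcases Int.even_or_odd a with h | h
  · simp [h]
  · simp [Int.not_even_iff_odd.mpr h]

/-- complex sign `(-1)^x` -/
noncomputable def sC (x : ℤ) : ℂ := ((sZ x : ℤ) : ℂ)

lemma conj_sC (x : ℤ) : (starRingEnd ℂ) (sC x) = sC x := by
  unfold sC; simp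

lemma sC_add (a b : ℤ) : sC (a + b) = sC a * sC b := by
  unfold sC; rw [sZ_add]; push_cast; ring

lemma sC_sq (a : ℤ) : sC a * sC a = 1 := by
  unfold sC; rw [← Int.cast_mul, sZ_sq]; norm_num

/-! ### One-dimensional column sums -/

lemma ico_int_sum {M : Type*} [AddCommMonoid M] (f : ℤ → M) (m : ℕ) :
    ∑ x ∈ Finset.Ico (0:ℤ) (m:ℤ), f x = ∑ x ∈ Finset.range m, f (x : ℤ) := by
  induction m with
  | zero => simp
  | succ m ih =>
    have h : Finset.Ico (0:ℤ) ((m:ℤ)+1) = insert (m:ℤ) (Finset.Ico (0:ℤ) (m:ℤ)) := by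
      ext x; simp [Finset.mem_Ico, Finset.mem_insert]
    push_cast
    rw [h, Finset.sum_insert (by simp), Finset.sum_range_succ, ih]
    exact add_comm _ _

lemma sum_sZ_even (m : ℕ) (hm : Even m) : ∑ x ∈ Finset.Ico (0:ℤ) (m:ℤ), sZ x = 0 := by
  rw [ico_int_sum]
  obtain ⟨t, ht⟩ := hm
  subst ht
  induction t with
  | zero => simp
  | succ t ih =>
    have : t + 1 + (t + 1) = (t + t) + 1 + 1 := by omega
    rw [this, Finset.sum_range_succ, Finset.sum_range_succ, ih]
    have h1 : sZ ((t + t : ℕ) : ℤ) = 1 := by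
      unfold sZ; rw [if_pos]; push_cast; exact ⟨t, by ring⟩
    have h2 : sZ (((t + t) + 1 : ℕ) : ℤ) = -1 := by
      unfold sZ; rw [if_neg]; push_cast
      rw [Int.not_even_iff_odd]; exact ⟨t, by ring⟩
    rw [h1, h2]; ring

lemma sum_col2_even (m : ℕ) (hm : Even m) :
    ∑ x ∈ Finset.Ico (0:ℤ) (m:ℤ), (2 * sZ x * x + 1) = 0 := by
  rw [ico_int_sum]
  obtain ⟨t, ht⟩ := hm
  subst ht
  induction t with
  | zero => simp
  | succ t ih =>
    have : t + 1 + (t + 1) = (t + t) + 1 + 1 := by omega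
    rw [this, Finset.sum_range_succ, Finset.sum_range_succ, ih]
    have h1 : sZ ((t + t : ℕ) : ℤ) = 1 := by
      unfold sZ; rw [if_pos]; push_cast; exact ⟨t, by ring⟩
    have h2 : sZ (((t + t) + 1 : ℕ) : ℤ) = -1 := by
      unfold sZ; rw [if_neg]; push_cast
      rw [Int.not_even_iff_odd]; exact ⟨t, by ring⟩
    rw [h1, h2]; push_cast; ring

/-! ### The index box and the difference box -/

/-- the box of indices where a `s₁ × ⋯ × s_r` array may be nonzero -/
noncomputable def boxF (r : ℕ) (s : Fin r → ℕ) : Finset (Fin r → ℤ) :=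
  Fintype.piFinset fun m => Finset.Ico (0:ℤ) ((s m : ℤ))

/-- the box of relevant correlation shifts -/
noncomputable def DF (r : ℕ) (s : Fin r → ℕ) : Finset (Fin r → ℤ) :=
  Fintype.piFinset fun m => Finset.Ico (1 - (s m : ℤ)) ((s m : ℤ))

lemma mem_boxF {r s} {i : Fin r → ℤ} :
    i ∈ boxF r s ↔ ∀ m, 0 ≤ i m ∧ i m < (s m : ℤ) := by
  simp [boxF, Fintype.mem_piFinset, Finset.mem_Ico]

lemma mem_DF {r s} {u : Fin r → ℤ} :
    u ∈ DF r s ↔ ∀ m, 1 - (s m : ℤ) ≤ u m ∧ u m < (s m : ℤ) := by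
  simp [DF, Fintype.mem_piFinset, Finset.mem_Ico]

lemma card_boxF (r : ℕ) (s : Fin r → ℕ) : (boxF r s).card = ∏ m, s m := by
  rw [boxF, Fintype.card_piFinset]
  congr 1; funext m
  rw [Int.card_Ico]; simp

lemma col_zero (r : ℕ) (s : Fin r → ℕ) (k : Fin r) (f : ℤ → ℤ)
    (hf : ∑ x ∈ Finset.Ico (0:ℤ) ((s k : ℤ)), f x = 0) :
    ∑ i ∈ boxF r s, f (i k) = 0 := by
  have h := Finset.prod_univ_sum (fun m => Finset.Ico (0:ℤ) ((s m : ℤ)))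
    (fun m x => if m = k then f x else 1)
  rw [show (boxF r s) = Fintype.piFinset fun m => Finset.Ico (0:ℤ) ((s m : ℤ)) from rfl]
  have hr : ∀ i : Fin r → ℤ, (∏ m, if m = k then f (i m) else 1) = f (i k) := by
    intro i
    rw [Finset.prod_ite_eq' Finset.univ k (fun m => f (i m))]
    simp
  rw [← Finset.sum_congr rfl fun i _ => hr i, ← h]
  apply Finset.prod_eq_zero (Finset.mem_univ k)
  simpa using hf

/-! ### The twisted evaluation character -/

/-- the character `i ↦ (-1)^{i_k} ω^{j i_k}` -/
noncomputable def eps {r : ℕ} (k : Fin r) (j : ℤ) (i : Fin r → ℤ) : ℂ :=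
  sC (i k) * ω ^ (j * i k)

lemma eps_rel {r : ℕ} (k : Fin r) (j : ℤ) (i u : Fin r → ℤ) :
    eps k j i * (starRingEnd ℂ) (eps k j (i + u)) = (starRingEnd ℂ) (eps k j u) := by
  simp only [eps, Pi.add_apply, map_mul, conj_sC, conj_omega_zpow, sC_add]
  have h1 : sC (i k) * ω ^ (j * i k) * (sC (i k) * sC (u k) * ω ^ (-(j * (i k + u k)))) =
      sC (i k) * sC (i k) * sC (u k) * (ω ^ (j * i k) * ω ^ (-(j * (i k + u k)))) := by ring
  rw [h1, sC_sq, one_mul, ← zpow_add₀ omega_ne_zero,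
    show j * i k + -(j * (i k + u k)) = -(j * u k) by ring]

lemma eps_zero {r : ℕ} (k : Fin r) (j : ℤ) : eps k j 0 = 1 := by
  unfold eps
  rw [show (0 : Fin r → ℤ) k = 0 from rfl]
  rw [mul_zero, zpow_zero, mul_one]
  unfold sC sZ
  norm_num

/-! ### Correlation sums over the boxes -/

lemma corr_eq_sum {r : ℕ} {s : Fin r → ℕ} {A : (Fin r → ℤ) → ℂ}
    (hA0 : ∀ i ∉ boxF r s, A i = 0) (u : Fin r → ℤ) :
    aperCorrArr A u = ∑ i ∈ boxF r s, A i * (starRingEnd ℂ) (A (i + u)) :=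
  tsum_eq_sum (fun i hi => by rw [hA0 i hi, zero_mul])

lemma shift_sum {r : ℕ} {s : Fin r → ℕ} (g : (Fin r → ℤ) → ℂ)
    (hg : ∀ x ∉ boxF r s, g x = 0) (i : Fin r → ℤ) (hi : i ∈ boxF r s) :
    ∑ u ∈ DF r s, g (i + u) = ∑ x ∈ boxF r s, g x := by
  have hmap : ∑ u ∈ DF r s, g (i + u)
      = ∑ x ∈ (DF r s).map (Equiv.addLeft i).toEmbedding, g x := by
    rw [Finset.sum_map]
    rfl
  rw [hmap]
  refine (Finset.sum_subset ?_ (fun x _ hx => hg x hx)).symm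
  intro x hx
  rw [Finset.mem_map]
  refine ⟨x - i, ?_, by simp⟩
  rw [mem_DF]
  intro m
  have h1 := (mem_boxF.1 hx) m
  have h2 := (mem_boxF.1 hi) m
  simp only [Pi.sub_apply]
  omega

lemma key_sum {r : ℕ} {s : Fin r → ℕ} {A : (Fin r → ℤ) → ℂ}
    (hA0 : ∀ i ∉ boxF r s, A i = 0) (k : Fin r) (j : ℤ) :
    ∑ u ∈ DF r s, (starRingEnd ℂ) (eps k j u) * aperCorrArr A u =
      (∑ i ∈ boxF r s, eps k j i * A i) *
        (starRingEnd ℂ) (∑ i ∈ boxF r s, eps k j i * A i) := by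
  have step1 : ∑ u ∈ DF r s, (starRingEnd ℂ) (eps k j u) * aperCorrArr A u =
      ∑ u ∈ DF r s, ∑ i ∈ boxF r s,
        (eps k j i * A i) * (starRingEnd ℂ) (eps k j (i + u) * A (i + u)) := by
    refine Finset.sum_congr rfl fun u _ => ?_
    rw [corr_eq_sum hA0 u, Finset.mul_sum]
    refine Finset.sum_congr rfl fun i _ => ?_
    rw [map_mul]
    linear_combination (-(A i * (starRingEnd ℂ) (A (i + u)))) * (eps_rel k j i u)
  rw [step1, Finset.sum_comm]
  have step2 : ∀ i ∈ boxF r s,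
      ∑ u ∈ DF r s, (eps k j i * A i) * (starRingEnd ℂ) (eps k j (i + u) * A (i + u)) =
      (eps k j i * A i) * (starRingEnd ℂ) (∑ x ∈ boxF r s, eps k j x * A x) := by
    intro i hi
    rw [← Finset.mul_sum]
    congr 1
    rw [map_sum]
    exact shift_sum (fun x => (starRingEnd ℂ) (eps k j x * A x))
      (fun x hx => by show (starRingEnd ℂ) (eps k j x * A x) = 0
                      rw [hA0 x hx, mul_zero, map_zero]) i hi
  rw [Finset.sum_congr rfl step2, ← Finset.sum_mul]

/-! ### Decomposition of the evaluation in the ring Z[ω] -/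

lemma omega_zpow_decomp (m : ℤ) :
    ω ^ m = 1 - ((m % 3 : ℤ) : ℂ) * (1 - ω) + (if m % 3 = 2 then (1:ℂ) else 0) * (1 - ω)^2 := by
  have hsplit : ω ^ m = (ω ^ (3:ℤ)) ^ (m / 3) * ω ^ (m % 3) := by
    rw [← zpow_mul, ← zpow_add₀ omega_ne_zero, Int.mul_ediv_add_emod]
  rw [hsplit, zpow_three_omega, one_zpow, one_mul]
  have h0 : 0 ≤ m % 3 := Int.emod_nonneg m (by norm_num)
  have h1 : m % 3 < 3 := Int.emod_lt_of_pos m (by norm_num)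
  have hc : m % 3 = 0 ∨ m % 3 = 1 ∨ m % 3 = 2 := by omega
  rcases hc with h | h | h <;> rw [h]
  · norm_num
  · norm_num
  · have : ω ^ ((2:ℤ)) = ω ^ (2:ℕ) := by
      rw [show (2:ℤ) = ((2:ℕ):ℤ) by norm_num, zpow_natCast]
    rw [this, if_pos rfl]
    push_cast
    ring

lemma T_decomp (r : ℕ) (s : Fin r → ℕ) (k : Fin r) (hk : Even (s k))
    (A : (Fin r → ℤ) → ℂ) (eA : (Fin r → ℤ) → ℤ)
    (h2 : ∀ i ∈ boxF r s, A i = ω ^ eA i) (j : ℤ) :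
    ∑ i ∈ boxF r s, eps k j i * A i
      = -(1 - ω) * ((∑ i ∈ boxF r s, sZ (i k) * ((j * i k + eA i) % 3) : ℤ) : ℂ)
        + (1 - ω)^2 *
          ((∑ i ∈ boxF r s, sZ (i k) * (if (j * i k + eA i) % 3 = 2 then 1 else 0) : ℤ) : ℂ) := by
  have hterm : ∀ i ∈ boxF r s, eps k j i * A i
      = sC (i k) + (-(1 - ω)) * (((sZ (i k) * ((j * i k + eA i) % 3) : ℤ)) : ℂ)
        + (1 - ω)^2 * (((sZ (i k) * (if (j * i k + eA i) % 3 = 2 then 1 else 0) : ℤ)) : ℂ) := by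
    intro i hi
    rw [h2 i hi, eps, mul_assoc, ← zpow_add₀ omega_ne_zero,
      omega_zpow_decomp (j * i k + eA i)]
    show sC (i k) * _ = _
    push_cast
    rw [show ((sZ (i k) : ℤ) : ℂ) = sC (i k) from rfl]
    split_ifs <;> push_cast <;> ring
  rw [Finset.sum_congr rfl hterm]
  rw [Finset.sum_add_distrib, Finset.sum_add_distrib, ← Finset.mul_sum, ← Finset.mul_sum]
  have hz : ∑ i ∈ boxF r s, sC (i k) = 0 := by
    have h := col_zero r s k sZ (sum_sZ_even (s k) hk)
    calc ∑ i ∈ boxF r s, sC (i k) = ((∑ i ∈ boxF r s, sZ (i k) : ℤ) : ℂ) := by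
          rw [Int.cast_sum]; rfl
      _ = 0 := by rw [h]; norm_num
  rw [hz, zero_add]
  push_cast
  ring

lemma intCast_emod_three (m : ℤ) : ((m % 3 : ℤ) : ZMod 3) = (m : ZMod 3) := by
  conv_rhs => rw [← Int.mul_ediv_add_emod m 3]
  push_cast
  rw [show (3 : ZMod 3) = 0 by decide]
  ring

lemma d_mod (r : ℕ) (s : Fin r → ℕ) (k : Fin r) (j : ℤ) (eA : (Fin r → ℤ) → ℤ) :
    ((∑ i ∈ boxF r s, sZ (i k) * ((j * i k + eA i) % 3) : ℤ) : ZMod 3)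
      = (j : ZMod 3) * ((∑ i ∈ boxF r s, sZ (i k) * (i k) : ℤ) : ZMod 3)
        + ((∑ i ∈ boxF r s, sZ (i k) * eA i : ℤ) : ZMod 3) := by
  push_cast
  rw [Finset.mul_sum, ← Finset.sum_add_distrib]
  refine Finset.sum_congr rfl fun i _ => ?_
  rw [intCast_emod_three]
  push_cast
  ring

lemma norm_form (d q : ℤ) (T : ℂ)
    (hT : T = -(1 - ω) * (d : ℂ) + (1 - ω)^2 * (q : ℂ)) :
    T * (starRingEnd ℂ) T = ((d^2 - 3*d*q + 3*q^2 : ℤ) : ℂ) * 3 := by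
  rw [hT]
  rw [map_add, map_mul, map_mul, map_neg, map_sub, map_pow, map_sub, map_one,
    omega_conj, map_intCast, map_intCast]
  push_cast
  linear_combination (((d:ℂ)^2*(ω-2) - (d:ℂ)*(q:ℂ)*(3*ω-9) + 6*(q:ℂ)^2*(ω-2))
    + ((d:ℂ)*(q:ℂ)*(ω-2) + (q:ℂ)^2*(ω-2)^2)*(ω^2+ω+1)) * omega_sum

/-! ### Three-phase arrays -/

lemma threePhase_zero {r : ℕ} {s : Fin r → ℕ} {A : (Fin r → ℤ) → ℂ}
    (hA : IsThreePhaseArr r s A) : ∀ i ∉ boxF r s, A i = 0 := by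
  intro i hi
  apply hA.1
  rw [mem_boxF] at hi
  push_neg at hi
  obtain ⟨m, hm⟩ := hi
  exact ⟨m, by omega⟩

lemma exp_of_mem {z : ℂ} (hz : z ∈ ({1, ω, ω ^ 2} : Set ℂ)) :
    ∃ e : ℤ, z = ω ^ e := by
  rcases hz with h | h | h
  · exact ⟨0, by rw [h, zpow_zero]⟩
  · exact ⟨1, by rw [h, zpow_one]⟩
  · exact ⟨2, by rw [h, show (2:ℤ) = ((2:ℕ):ℤ) by norm_num, zpow_natCast]⟩

lemma entry_unit {z : ℂ} (hz : z ∈ ({1, ω, ω ^ 2} : Set ℂ)) :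
    z * (starRingEnd ℂ) z = 1 := by
  obtain ⟨e, he⟩ := exp_of_mem hz
  rw [he, conj_omega_zpow, ← zpow_add₀ omega_ne_zero, add_neg_cancel, zpow_zero]

lemma corr_zero {r : ℕ} {s : Fin r → ℕ} {A : (Fin r → ℤ) → ℂ}
    (hA : IsThreePhaseArr r s A) :
    aperCorrArr A 0 = ((∏ m, s m : ℕ) : ℂ) := by
  rw [corr_eq_sum (threePhase_zero hA) 0]
  have : ∀ i ∈ boxF r s, A i * (starRingEnd ℂ) (A (i + 0)) = 1 := by
    intro i hi
    rw [add_zero]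
    exact entry_unit (hA.2 i (mem_boxF.1 hi))
  rw [Finset.sum_congr rfl this, Finset.sum_const, card_boxF]
  simp

/-- packaging of the λ-adic data of a single three-phase array -/
lemma array_package (r : ℕ) (s : Fin r → ℕ) (k : Fin r) (hk : Even (s k))
    {A : (Fin r → ℤ) → ℂ} (hA : IsThreePhaseArr r s A) :
    ∃ δ : ZMod 3, ∀ j : ℤ, ∃ d q : ℤ,
      (∑ i ∈ boxF r s, eps k j i * A i) = -(1 - ω) * (d : ℂ) + (1 - ω)^2 * (q : ℂ)
      ∧ (d : ZMod 3)
          = (j : ZMod 3) * ((∑ i ∈ boxF r s, sZ (i k) * (i k) : ℤ) : ZMod 3) + δ := by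
  have hEx : ∀ i : Fin r → ℤ, i ∈ boxF r s → ∃ e : ℤ, A i = ω ^ e := by
    intro i hi
    exact exp_of_mem (hA.2 i (mem_boxF.1 hi))
  choose! eA heA using hEx
  refine ⟨((∑ i ∈ boxF r s, sZ (i k) * eA i : ℤ) : ZMod 3), fun j => ?_⟩
  exact ⟨_, _, T_decomp r s k hk A eA heA j, d_mod r s k j eA⟩

/-- There is no 3-phase `s₁ × ⋯ × s_r` Golay array triad when
`∏ₖ s_k ≡ 4 (mod 6)`. -/
theorem no_golay_array_triad_of_four_mod_six (r : ℕ) (s : Fin r → ℕ)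
    (hmod : (∏ k, s k) % 6 = 4) :
    ¬ ∃ A B C : (Fin r → ℤ) → ℂ, GolayArrTriad r s A B C := by
  rintro ⟨A, B, C, hA, hB, hC, htriad⟩
  obtain ⟨n, hn⟩ : ∃ n : ℕ, ∏ k, s k = n := ⟨_, rfl⟩
  rw [hn] at hmod
  -- basic facts about n and s
  have hpos : ∀ m, 0 < s m := by
    intro m
    by_contra hm
    have hsm : s m = 0 := by omega
    have h0 : ∏ k, s k = 0 := Finset.prod_eq_zero (Finset.mem_univ m) hsm
    rw [hn] at h0
    omega
  obtain ⟨k, -, hk2⟩ : ∃ k ∈ Finset.univ, 2 ∣ s k := by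
    refine Nat.prime_two.prime.exists_mem_finset_dvd ?_
    have h2n : 2 ∣ n := by omega
    rw [hn]
    exact h2n
  have hk : Even (s k) := even_iff_two_dvd.2 hk2
  have h0D : (0 : Fin r → ℤ) ∈ DF r s := by
    rw [mem_DF]
    intro m
    have := hpos m
    simp only [Pi.zero_apply]
    omega
  have h30 : (3 : ZMod 3) = 0 := by decide
  have hn3 : ((n : ℕ) : ZMod 3) = 1 := by
    obtain ⟨t, ht⟩ : ∃ t, n = 6 * t + 4 := ⟨n / 6, by omega⟩
    rw [ht]; push_cast
    rw [show ((6:ZMod 3)) = 0 by decide, show ((4:ZMod 3)) = 1 by decide]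
    ring
  -- the universal quantity M with 2M = -n
  obtain ⟨M, hM⟩ : ∃ M : ℤ, ∑ i ∈ boxF r s, sZ (i k) * (i k) = M := ⟨_, rfl⟩
  have h2M : 2 * M + (n : ℤ) = 0 := by
    have h : ∑ i ∈ boxF r s, (2 * sZ (i k) * (i k) + 1) = 0 :=
      col_zero r s k (fun x => 2 * sZ x * x + 1) (sum_col2_even (s k) hk)
    have hsplit : ∑ i ∈ boxF r s, (2 * sZ (i k) * (i k) + 1)
        = 2 * M + ((boxF r s).card : ℤ) := by
      rw [Finset.sum_add_distrib, Finset.sum_const, ← hM, Finset.mul_sum,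
        nsmul_eq_mul, mul_one]
      congr 1
      exact Finset.sum_congr rfl fun i _ => by ring
    rw [hsplit, card_boxF, hn] at h
    exact h
  have hμ : ((M : ℤ) : ZMod 3) = 1 := by
    have h0 : ((2 * M + (n:ℤ) : ℤ) : ZMod 3) = ((0:ℤ) : ZMod 3) := by rw [h2M]
    push_cast at h0
    rw [hn3] at h0
    have h2 : (2 : ZMod 3) * ((M : ℤ) : ZMod 3) = 2 * 1 := by
      linear_combination h0 - h30
    exact mul_left_cancel₀ (show (2:ZMod 3) ≠ 0 by decide) h2
  -- package the three arrays
  obtain ⟨δA, hδA⟩ := array_package r s k hk hA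
  obtain ⟨δB, hδB⟩ := array_package r s k hk hB
  obtain ⟨δC, hδC⟩ := array_package r s k hk hC
  -- the master equation, for every integer twist j
  have master : ∀ j : ℤ, ((j : ZMod 3) + δA)^2 + ((j : ZMod 3) + δB)^2
      + ((j : ZMod 3) + δC)^2 = 1 := by
    intro j
    obtain ⟨dA, qA, hTA, hdA⟩ := hδA j
    obtain ⟨dB, qB, hTB, hdB⟩ := hδB j
    obtain ⟨dC, qC, hTC, hdC⟩ := hδC j
    rw [hM] at hdA hdB hdC
    -- sum of the three D-box weighted correlation sums
    have hcol : ∑ u ∈ DF r s, (starRingEnd ℂ) (eps k j u)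
        * (aperCorrArr A u + aperCorrArr B u + aperCorrArr C u) = 3 * ((n:ℕ) : ℂ) := by
      rw [Finset.sum_eq_single_of_mem 0 h0D (fun u _ hu => by rw [htriad u hu, mul_zero])]
      rw [eps_zero, map_one, one_mul]
      rw [corr_zero hA, corr_zero hB, corr_zero hC, hn]
      ring
    have hsplit : ∑ u ∈ DF r s, (starRingEnd ℂ) (eps k j u)
        * (aperCorrArr A u + aperCorrArr B u + aperCorrArr C u)
        = (∑ u ∈ DF r s, (starRingEnd ℂ) (eps k j u) * aperCorrArr A u)
          + (∑ u ∈ DF r s, (starRingEnd ℂ) (eps k j u) * aperCorrArr B u)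
          + (∑ u ∈ DF r s, (starRingEnd ℂ) (eps k j u) * aperCorrArr C u) := by
      rw [← Finset.sum_add_distrib, ← Finset.sum_add_distrib]
      exact Finset.sum_congr rfl fun u _ => by ring
    have hTT : (∑ i ∈ boxF r s, eps k j i * A i)
          * (starRingEnd ℂ) (∑ i ∈ boxF r s, eps k j i * A i)
        + (∑ i ∈ boxF r s, eps k j i * B i)
          * (starRingEnd ℂ) (∑ i ∈ boxF r s, eps k j i * B i)
        + (∑ i ∈ boxF r s, eps k j i * C i)
          * (starRingEnd ℂ) (∑ i ∈ boxF r s, eps k j i * C i) = 3 * ((n:ℕ) : ℂ) := by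
      rw [← key_sum (threePhase_zero hA) k j, ← key_sum (threePhase_zero hB) k j,
        ← key_sum (threePhase_zero hC) k j, ← hsplit, hcol]
    rw [norm_form dA qA _ hTA, norm_form dB qB _ hTB, norm_form dC qC _ hTC] at hTT
    -- deduce the integer identity
    have hint : (dA^2 - 3*dA*qA + 3*qA^2) + (dB^2 - 3*dB*qB + 3*qB^2)
        + (dC^2 - 3*dC*qC + 3*qC^2) = (n : ℤ) := by
      have h3 : ((((dA^2 - 3*dA*qA + 3*qA^2) + (dB^2 - 3*dB*qB + 3*qB^2)
          + (dC^2 - 3*dC*qC + 3*qC^2)) : ℤ) : ℂ) * 3 = (((n:ℤ)) : ℂ) * 3 := by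
        push_cast
        push_cast at hTT
        linear_combination hTT
      have h4 := mul_right_cancel₀ (show (3:ℂ) ≠ 0 by norm_num) h3
      exact_mod_cast h4
    -- reduce mod 3
    have hz : ((dA : ZMod 3))^2 + ((dB : ZMod 3))^2 + ((dC : ZMod 3))^2 = 1 := by
      have hq := congrArg (fun x : ℤ => ((x : ZMod 3))) hint
      push_cast at hq
      rw [hn3] at hq
      linear_combination hq + ((dA:ZMod 3)*(qA:ZMod 3) - (qA:ZMod 3)^2
        + (dB:ZMod 3)*(qB:ZMod 3) - (qB:ZMod 3)^2
        + (dC:ZMod 3)*(qC:ZMod 3) - (qC:ZMod 3)^2) * h30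
    rw [hdA, hdB, hdC, hμ] at hz
    rw [mul_one] at hz
    exact hz
  -- derive contradiction from the master equation
  have hfin : ∀ t : ZMod 3, (t + δA)^2 + (t + δB)^2 + (t + δC)^2 = 1 := by
    intro t
    obtain ⟨j, hj⟩ := ZMod.intCast_surjective (n := 3) t
    rw [← hj]
    exact master j
  exact (by decide : ∀ a b c : ZMod 3,
    ¬ ∀ t : ZMod 3, (t + a)^2 + (t + b)^2 + (t + c)^2 = 1) δA δB δC hfin
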